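/- Let t be a positive rational number with 2t an integer, let G be a minimally t-tough graph, and let e = uv be a non-bridge edge of G. Let S(e) be a minimum-cardinality vertex set S ⊆ V(G) with w(G−S) ≤ |S|/t, w((G−e)−S) > |S|/t, and such that e is a bridge in G−S. If G−S(e) is connected (i.e., D(e) = ∅), then δ(G) ≤ 2t or each of u and v is contained in a 2t-vertex-cut of G. -/

import Mathlib

open SimpleGraph

variable {V : Type*}

/-- `numComponents G S` is the number of connected components of `G − S`,
the graph obtained from `G` by deleting the vertices of `S`. -/
noncomputable def numComponents (G : SimpleGraph V) (S : Set V) : ℕ :=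
  Nat.card ((G.induce Sᶜ).ConnectedComponent)

/-- `HasToughness G t` says that the toughness of `G` is exactly `t`, i.e.
`t = min { |S| / w(G−S) : S ⊆ V(G), w(G−S) ≥ 2 }`.  (For a complete graph no
such `S` exists and this predicate never holds, matching `τ(G) = ∞`.) -/
def HasToughness [Fintype V] (G : SimpleGraph V) (t : ℚ) : Prop :=
  (∀ S : Finset V, 2 ≤ numComponents G ↑S →
      t ≤ (S.card : ℚ) / (numComponents G ↑S : ℚ)) ∧
  ∃ S : Finset V, 2 ≤ numComponents G ↑S ∧
      t = (S.card : ℚ) / (numComponents G ↑S : ℚ)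

/-- `G` is minimally `t`-tough: `τ(G) = t` and `τ(G − e) < t` for every edge
`e` of `G` (i.e. some vertex set witnesses a ratio `< t` in `G − e`). -/
def MinimallyTough [Fintype V] (G : SimpleGraph V) (t : ℚ) : Prop :=
  HasToughness G t ∧
  ∀ u v : V, G.Adj u v →
    ∃ S : Finset V, 2 ≤ numComponents (G.deleteEdges {s(u, v)}) ↑S ∧
      (S.card : ℚ) / (numComponents (G.deleteEdges {s(u, v)}) ↑S : ℚ) < t

/-- `G` is claw-free: it has no induced subgraph isomorphic to `K_{1,3}`. -/
def ClawFree (G : SimpleGraph V) : Prop :=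
  ¬ ∃ v a b c : V, a ≠ b ∧ a ≠ c ∧ b ≠ c ∧
      G.Adj v a ∧ G.Adj v b ∧ G.Adj v c ∧
      ¬ G.Adj a b ∧ ¬ G.Adj a c ∧ ¬ G.Adj b c

/-- The vertex connectivity `κ(G)` of a noncomplete graph: the least cardinality
of a vertex set whose deletion disconnects `G`. -/
noncomputable def vconn [Fintype V] (G : SimpleGraph V) : ℕ :=
  sInf {k | ∃ S : Finset V, S.card = k ∧ 2 ≤ numComponents G ↑S}

/-- The vertex set of the connected component of `G − S` containing `u`
(empty if `u ∈ S`). -/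
def compOf (G : SimpleGraph V) (S : Set V) (u : V) : Set V :=
  {w | ∃ (hu : u ∈ Sᶜ) (hw : w ∈ Sᶜ), (G.induce Sᶜ).Reachable ⟨u, hu⟩ ⟨w, hw⟩}

/-- `Dset G S u` is the union of the components of `G − S` other than the one
containing `u`. -/
def Dset (G : SimpleGraph V) (S : Set V) (u : V) : Set V :=
  Sᶜ \ compOf G S u

/-- `nbrsIn G X Y = N_X(Y)`: the set of vertices in `X − Y` adjacent (in `G`)
to some vertex of `Y`. -/
def nbrsIn (G : SimpleGraph V) (X Y : Set V) : Set V :=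
  {x | x ∈ X \ Y ∧ ∃ y ∈ Y, G.Adj x y}

/-- The edge `uv` is a bridge of the graph `G − S`: both endpoints survive the
deletion of `S`, they are adjacent, and deleting the edge `uv` increases the
number of connected components of `G − S`. -/
def IsBridgeIn (G : SimpleGraph V) (S : Set V) (u v : V) : Prop :=
  u ∉ S ∧ v ∉ S ∧ G.Adj u v ∧
    numComponents G S < numComponents (G.deleteEdges {s(u, v)}) S

/-- `GoodCut G t u v S`: `S` is a vertex set with `w(G−S) ≤ |S|/t`,
`w((G−e)−S) > |S|/t` and such that `e = uv` is a bridge in `G − S`. -/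
def GoodCut [Fintype V] (G : SimpleGraph V) (t : ℚ) (u v : V) (S : Finset V) : Prop :=
  (numComponents G ↑S : ℚ) ≤ (S.card : ℚ) / t ∧
  (S.card : ℚ) / t < (numComponents (G.deleteEdges {s(u, v)}) ↑S : ℚ) ∧
  IsBridgeIn G ↑S u v

/-- `S` is a minimum-cardinality vertex set as guaranteed by Lemma 2.2,
i.e. `S = S(e)` for the edge `e = uv`. -/
def IsMinGoodCut [Fintype V] (G : SimpleGraph V) (t : ℚ) (u v : V) (S : Finset V) : Prop :=
  GoodCut G t u v S ∧ ∀ S' : Finset V, GoodCut G t u v S' → S.card ≤ S'.card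

/-- `x` is contained in some `2t`-vertex-cut of `G`. -/
def InTwoTCut [Fintype V] (G : SimpleGraph V) (t : ℚ) (x : V) : Prop :=
  ∃ T : Finset V, (T.card : ℚ) = 2 * t ∧ 2 ≤ numComponents G ↑T ∧ x ∈ T

/-- A fragment of `G`: the vertex set of a connected component of `G − T` for
some minimum vertex cut `T` of `G`. -/
def IsGraphFragment [Fintype V] (G : SimpleGraph V) (A : Set V) : Prop :=
  ∃ (T : Finset V) (a : V), T.card = vconn G ∧ 2 ≤ numComponents G ↑T ∧
    a ∉ T ∧ A = compOf G ↑T a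

/-- An atom of `G`: a fragment of minimum cardinality. -/
def IsGraphAtom [Fintype V] (G : SimpleGraph V) (A : Set V) : Prop :=
  IsGraphFragment G A ∧ ∀ B : Set V, IsGraphFragment G B → A.ncard ≤ B.ncard


private lemma edge_ne_of_ne_left {a b u v : V} (hau : a ≠ u) (hbu : b ≠ u) :
    s(a, b) ≠ s(u, v) := by
  intro hEq
  rcases Sym2.eq_iff.mp hEq with ⟨h1, _⟩ | ⟨_, h2⟩
  · exact hau h1
  · exact hbu h2

private lemma edge_ne_of_ne_right {a b u v : V} (hav : a ≠ v) (hbv : b ≠ v) :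
    s(a, b) ≠ s(u, v) := by
  intro hEq
  rcases Sym2.eq_iff.mp hEq with ⟨_, h2⟩ | ⟨h1, _⟩
  · exact hbv h2
  · exact hav h1

private lemma walk_transfer {G : SimpleGraph V} {X Y : Set V} (hXY : X ⊆ Y)
    {E : Set (Sym2 V)}
    (hE : ∀ a b : V, a ∈ X → b ∈ X → s(a, b) ∉ E)
    {a b : ↥X} (p : (G.induce X).Walk a b) :
    ((G.deleteEdges E).induce Y).Reachable ⟨a.1, hXY a.2⟩ ⟨b.1, hXY b.2⟩ := by
  induction p with
  | nil => exact Reachable.refl _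
  | @cons x y z h p ih =>
    refine Reachable.trans (Adj.reachable ?_) ih
    have hadj : G.Adj x.1 y.1 := h
    exact SimpleGraph.comap_adj.mpr
      (SimpleGraph.deleteEdges_adj.mpr ⟨hadj, hE _ _ x.2 y.2⟩)

private lemma walk_transfer_uv {G : SimpleGraph V} {u v : V} {X : Set V}
    (hu : u ∈ X) (hv : v ∈ X) {a b : ↥X} (p : (G.induce X).Walk a b)
    (ha : ((G.deleteEdges {s(u, v)}).induce X).Reachable ⟨u, hu⟩ a ∨
          ((G.deleteEdges {s(u, v)}).induce X).Reachable ⟨v, hv⟩ a) :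
    ((G.deleteEdges {s(u, v)}).induce X).Reachable ⟨u, hu⟩ b ∨
    ((G.deleteEdges {s(u, v)}).induce X).Reachable ⟨v, hv⟩ b := by
  induction p with
  | nil => exact ha
  | @cons x y z h p ih =>
    refine ih ?_
    by_cases hc : s(x.1, y.1) = s(u, v)
    · rcases Sym2.eq_iff.mp hc with ⟨h1, h2⟩ | ⟨h1, h2⟩
      · right
        rw [show (⟨v, hv⟩ : ↥X) = y from Subtype.ext h2.symm]
      · left
        rw [show (⟨u, hu⟩ : ↥X) = y from Subtype.ext h2.symm]
    · have hadj : ((G.deleteEdges {s(u, v)}).induce X).Adj x y := by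
        refine SimpleGraph.comap_adj.mpr (SimpleGraph.deleteEdges_adj.mpr ⟨h, ?_⟩)
        simpa using hc
      rcases ha with h1 | h1
      · exact Or.inl (h1.trans hadj.reachable)
      · exact Or.inr (h1.trans hadj.reachable)

/-- Let `t > 0` with `2t` an integer, `G` minimally `t`-tough, `e = uv` a
non-bridge edge of `G`, and `S = S(e)` a minimum good cut for `e`.  If
`G − S(e)` is connected (i.e. `D(e) = ∅`), then `δ(G) ≤ 2t` or each of `u`
and `v` is contained in a `2t`-vertex-cut of `G`. -/
theorem min_good_cut_empty_D [Fintype V] (G : SimpleGraph V) [DecidableRel G.Adj]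
    (t : ℚ) (ht : 0 < t) (h2t : ∃ k : ℤ, (k : ℚ) = 2 * t)
    (hmt : MinimallyTough G t) (u v : V) (huv : G.Adj u v)
    (hnb : ¬ IsBridgeIn G (∅ : Set V) u v)
    (S : Finset V) (hS : IsMinGoodCut G t u v S)
    (hD : Dset G ↑S u = ∅) :
    (∃ w : V, (G.degree w : ℚ) ≤ 2 * t) ∨
      (InTwoTCut G t u ∧ InTwoTCut G t v) := by
  classical
  obtain ⟨⟨hgc1, hgc2, husn, hvsn, hadj, hbridge⟩, hmin⟩ := hS
  set Sc : Set V := (↑S : Set V)ᶜ with hScdef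
  have huS : u ∈ Sc := husn
  have hvS : v ∈ Sc := hvsn
  have hne : u ≠ v := huv.ne
  set u0 : ↥Sc := ⟨u, huS⟩ with hu0def
  set v0 : ↥Sc := ⟨v, hvS⟩ with hv0def
  set H : SimpleGraph ↥Sc := (G.deleteEdges {s(u, v)}).induce Sc with hHdef
  -- every vertex of G - S is reachable from u
  have hreach : ∀ x : ↥Sc, (G.induce Sc).Reachable u0 x := by
    intro x
    have hx : x.1 ∈ compOf G ↑S u := by
      by_contra hcon
      have hmem : x.1 ∈ Dset G ↑S u := ⟨x.2, hcon⟩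
      rw [hD] at hmem
      exact hmem
    obtain ⟨hu1, hx1, hr⟩ := hx
    exact hr
  -- G - S has exactly one component
  have hone : numComponents G ↑S = 1 := by
    rw [numComponents, Nat.card_eq_one_iff_unique]
    refine ⟨⟨fun c d => ?_⟩, ⟨(G.induce Sc).connectedComponentMk u0⟩⟩
    refine ConnectedComponent.ind₂ (fun x y => ?_) c d
    exact ConnectedComponent.sound ((hreach x).symm.trans (hreach y))
  -- every vertex of (G - e) - S is reachable from u or from v
  have hHall : ∀ x : ↥Sc, H.Reachable u0 x ∨ H.Reachable v0 x := by
    intro x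
    exact walk_transfer_uv huS hvS (hreach x).some (Or.inl (Reachable.refl _))
  -- (G - e) - S has at most two components
  have hH2 : numComponents (G.deleteEdges {s(u, v)}) ↑S ≤ 2 := by
    rw [numComponents]
    have hsurj : Function.Surjective
        (fun i : Fin 2 => if i = 0 then H.connectedComponentMk u0
          else H.connectedComponentMk v0) := by
      intro c
      refine ConnectedComponent.ind (fun x => ?_) c
      rcases hHall x with h | h
      · exact ⟨0, by simpa using (ConnectedComponent.sound h)⟩
      · exact ⟨1, by simpa using (ConnectedComponent.sound h)⟩
    calc Nat.card H.ConnectedComponent ≤ Nat.card (Fin 2) :=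
          Nat.card_le_card_of_surjective _ hsurj
      _ = 2 := by simp
  have h2H : 2 ≤ numComponents (G.deleteEdges {s(u, v)}) ↑S := by
    rw [hone] at hbridge
    omega
  -- u and v are not reachable in (G - e) - S
  have hnotr : ¬ H.Reachable u0 v0 := by
    intro hr
    have hall : ∀ x : ↥Sc, H.Reachable u0 x := by
      intro x
      rcases hHall x with h | h
      · exact h
      · exact hr.trans h
    have h1 : numComponents (G.deleteEdges {s(u, v)}) ↑S = 1 := by
      rw [numComponents, Nat.card_eq_one_iff_unique]
      refine ⟨⟨fun c d => ?_⟩, ⟨H.connectedComponentMk u0⟩⟩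
      refine ConnectedComponent.ind₂ (fun x y => ?_) c d
      exact ConnectedComponent.sound ((hall x).symm.trans (hall y))
    omega
  -- |S| < 2t
  have hqlt : (S.card : ℚ) < 2 * t := by
    have h2 : (S.card : ℚ) / t < 2 := lt_of_lt_of_le hgc2 (by exact_mod_cast hH2)
    have := (div_lt_iff₀ ht).mp h2
    linarith
  obtain ⟨k, hk⟩ := h2t
  have hk1 : (S.card : ℚ) + 1 ≤ 2 * t := by
    have hz : (S.card : ℤ) < k := by exact_mod_cast hqlt.trans_eq hk.symm
    have hz1 : (S.card : ℤ) + 1 ≤ k := hz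
    calc (S.card : ℚ) + 1 ≤ (k : ℚ) := by exact_mod_cast hz1
      _ = 2 * t := hk
  have husF : u ∉ S := by simpa using husn
  have hvsF : v ∉ S := by simpa using hvsn
  -- case analysis
  by_cases hEu : ∃ w : ↥Sc, w ≠ u0 ∧ H.Reachable u0 w
  · by_cases hEv : ∃ w : ↥Sc, w ≠ v0 ∧ H.Reachable v0 w
    · right
      obtain ⟨w, hwne, hwr⟩ := hEu
      obtain ⟨w', hwne', hwr'⟩ := hEv
      constructor
      · -- 2t-cut containing u : insert u S
        set T : Finset V := insert u S with hTdef
        have hTc : T.card = S.card + 1 := Finset.card_insert_of_notMem husF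
        have hvT : v ∈ (↑T : Set V)ᶜ := by
          simp only [hTdef, Finset.coe_insert, Set.mem_compl_iff, Set.mem_insert_iff]
          push_neg
          exact ⟨hne.symm, hvsF⟩
        have hwu : w.1 ≠ u := fun h => hwne (Subtype.ext h)
        have hwT : w.1 ∈ (↑T : Set V)ᶜ := by
          simp only [hTdef, Finset.coe_insert, Set.mem_compl_iff, Set.mem_insert_iff]
          push_neg
          exact ⟨hwu, fun h => w.2 (Finset.mem_coe.mpr h)⟩
        have hXY : ((↑T : Set V)ᶜ) ⊆ Sc := by
          intro x hx
          simp only [hTdef, Finset.coe_insert, Set.mem_compl_iff, Set.mem_insert_iff] at hx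
          push_neg at hx
          simpa [hScdef] using hx.2
        have hdiff : (G.induce ((↑T : Set V)ᶜ)).connectedComponentMk ⟨v, hvT⟩ ≠
            (G.induce ((↑T : Set V)ᶜ)).connectedComponentMk ⟨w.1, hwT⟩ := by
          intro heq
          have hr := ConnectedComponent.exact heq
          have hE : ∀ a b : V, a ∈ ((↑T : Set V)ᶜ) → b ∈ ((↑T : Set V)ᶜ) →
              s(a, b) ∉ ({s(u, v)} : Set (Sym2 V)) := by
            intro a b haX hbX hab
            simp only [hTdef, Finset.coe_insert, Set.mem_compl_iff,
              Set.mem_insert_iff] at haX hbX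
            push_neg at haX hbX
            exact edge_ne_of_ne_left haX.1 hbX.1 (by simpa using hab)
          have htrans := walk_transfer hXY hE hr.some
          have hHvw : H.Reachable v0 ⟨w.1, w.2⟩ := htrans
          exact hnotr (hwr.trans hHvw.symm)
        have h2T : 2 ≤ numComponents G ↑T := by
          rw [numComponents]
          have : Nontrivial ((G.induce ((↑T : Set V)ᶜ)).ConnectedComponent) :=
            ⟨_, _, hdiff⟩
          exact Finite.one_lt_card_iff_nontrivial.mpr this
        have htough := hmt.1.1 T h2T
        have hmq : (2 : ℚ) ≤ (numComponents G ↑T : ℚ) := by exact_mod_cast h2T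
        have hmpos : (0 : ℚ) < (numComponents G ↑T : ℚ) := by linarith
        have h2tle : 2 * t ≤ (T.card : ℚ) := by
          have := (le_div_iff₀ hmpos).mp htough
          nlinarith
        have hTeq : (T.card : ℚ) = 2 * t := by
          refine le_antisymm ?_ h2tle
          rw [hTc]
          push_cast
          exact hk1
        exact ⟨T, hTeq, h2T, Finset.mem_insert_self _ _⟩
      · -- 2t-cut containing v : insert v S
        set T : Finset V := insert v S with hTdef
        have hTc : T.card = S.card + 1 := Finset.card_insert_of_notMem hvsF
        have huT : u ∈ (↑T : Set V)ᶜ := by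
          simp only [hTdef, Finset.coe_insert, Set.mem_compl_iff, Set.mem_insert_iff]
          push_neg
          exact ⟨hne, husF⟩
        have hwv : w'.1 ≠ v := fun h => hwne' (Subtype.ext h)
        have hwT : w'.1 ∈ (↑T : Set V)ᶜ := by
          simp only [hTdef, Finset.coe_insert, Set.mem_compl_iff, Set.mem_insert_iff]
          push_neg
          exact ⟨hwv, fun h => w'.2 (Finset.mem_coe.mpr h)⟩
        have hXY : ((↑T : Set V)ᶜ) ⊆ Sc := by
          intro x hx
          simp only [hTdef, Finset.coe_insert, Set.mem_compl_iff, Set.mem_insert_iff] at hx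
          push_neg at hx
          simpa [hScdef] using hx.2
        have hdiff : (G.induce ((↑T : Set V)ᶜ)).connectedComponentMk ⟨u, huT⟩ ≠
            (G.induce ((↑T : Set V)ᶜ)).connectedComponentMk ⟨w'.1, hwT⟩ := by
          intro heq
          have hr := ConnectedComponent.exact heq
          have hE : ∀ a b : V, a ∈ ((↑T : Set V)ᶜ) → b ∈ ((↑T : Set V)ᶜ) →
              s(a, b) ∉ ({s(u, v)} : Set (Sym2 V)) := by
            intro a b haX hbX hab
            simp only [hTdef, Finset.coe_insert, Set.mem_compl_iff,
              Set.mem_insert_iff] at haX hbX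
            push_neg at haX hbX
            exact edge_ne_of_ne_right haX.1 hbX.1 (by simpa using hab)
          have htrans := walk_transfer hXY hE hr.some
          have hHuw : H.Reachable u0 ⟨w'.1, w'.2⟩ := htrans
          exact hnotr (hHuw.trans hwr'.symm)
        have h2T : 2 ≤ numComponents G ↑T := by
          rw [numComponents]
          have : Nontrivial ((G.induce ((↑T : Set V)ᶜ)).ConnectedComponent) :=
            ⟨_, _, hdiff⟩
          exact Finite.one_lt_card_iff_nontrivial.mpr this
        have htough := hmt.1.1 T h2T
        have hmq : (2 : ℚ) ≤ (numComponents G ↑T : ℚ) := by exact_mod_cast h2T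
        have hmpos : (0 : ℚ) < (numComponents G ↑T : ℚ) := by linarith
        have h2tle : 2 * t ≤ (T.card : ℚ) := by
          have := (le_div_iff₀ hmpos).mp htough
          nlinarith
        have hTeq : (T.card : ℚ) = 2 * t := by
          refine le_antisymm ?_ h2tle
          rw [hTc]
          push_cast
          exact hk1
        exact ⟨T, hTeq, h2T, Finset.mem_insert_self _ _⟩
    · -- v is isolated on its side: deg v ≤ 2t
      left
      refine ⟨v, ?_⟩
      have hsub : G.neighborFinset v ⊆ insert u S := by
        intro y hy
        rw [SimpleGraph.mem_neighborFinset] at hy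
        by_contra hyn
        simp only [Finset.mem_insert] at hyn
        push_neg at hyn
        have hySc : y ∈ Sc := by simpa [hScdef] using hyn.2
        have hedge : s(v, y) ∉ ({s(u, v)} : Set (Sym2 V)) := by
          exact fun hmem => edge_ne_of_ne_left hne.symm hyn.1 (Set.mem_singleton_iff.mp hmem)
        exact hEv ⟨⟨y, hySc⟩, fun h => hy.ne' (congrArg Subtype.val h),
          (Adj.reachable (SimpleGraph.comap_adj.mpr
            (SimpleGraph.deleteEdges_adj.mpr ⟨hy, hedge⟩)))⟩
      have hdeg : G.degree v ≤ S.card + 1 := by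
        calc G.degree v = (G.neighborFinset v).card := rfl
          _ ≤ (insert u S).card := Finset.card_le_card hsub
          _ ≤ S.card + 1 := Finset.card_insert_le _ _
      calc (G.degree v : ℚ) ≤ (S.card : ℚ) + 1 := by exact_mod_cast hdeg
        _ ≤ 2 * t := hk1
  · -- u is isolated on its side: deg u ≤ 2t
    left
    refine ⟨u, ?_⟩
    have hsub : G.neighborFinset u ⊆ insert v S := by
      intro y hy
      rw [SimpleGraph.mem_neighborFinset] at hy
      by_contra hyn
      simp only [Finset.mem_insert] at hyn
      push_neg at hyn
      have hySc : y ∈ Sc := by simpa [hScdef] using hyn.2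
      have hedge : s(u, y) ∉ ({s(u, v)} : Set (Sym2 V)) := by
        exact fun hmem => edge_ne_of_ne_right hne hyn.1 (Set.mem_singleton_iff.mp hmem)
      exact hEu ⟨⟨y, hySc⟩, fun h => hy.ne' (congrArg Subtype.val h),
        (Adj.reachable (SimpleGraph.comap_adj.mpr
          (SimpleGraph.deleteEdges_adj.mpr ⟨hy, hedge⟩)))⟩
    have hdeg : G.degree u ≤ S.card + 1 := by
      calc G.degree u = (G.neighborFinset u).card := rfl
        _ ≤ (insert v S).card := Finset.card_le_card hsub
        _ ≤ S.card + 1 := Finset.card_insert_le _ _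
    calc (G.degree u : ℚ) ≤ (S.card : ℚ) + 1 := by exact_mod_cast hdeg
      _ ≤ 2 * t := hk1
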